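/- Fix n \ge 2. For any positive integer k with k + 2^k - 1 \le n and any prime p with n - 2^k + 1 \le p \le (n - k - 2^k + 3)\,2^k - 3, there exists an arithmetical structure on K_n whose maximum value is p. -/

import Mathlib

/-- Binary representation: any `p` is a sum of powers of two with few terms. -/
lemma two_pow_sum_rep (p : ℕ) : ∃ l : Multiset ℕ, (l.map (2 ^ ·)).sum = p ∧
    2 ^ Multiset.card l ≤ p + 1 ∧ ∀ a ∈ l, 2 ^ a ≤ p := by
  induction p using Nat.strong_induction_on with
  | _ p ih =>
    rcases Nat.eq_zero_or_pos p with h0 | h0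
    · exact ⟨0, by simp [h0]⟩
    · set a := Nat.log 2 p with ha
      have h1 : 2 ^ a ≤ p := Nat.pow_log_le_self 2 h0.ne'
      have h2 : p < 2 ^ (a + 1) := Nat.lt_pow_succ_log_self (by norm_num) p
      have hplt : p - 2 ^ a < p := by have := Nat.one_le_two_pow (n := a); omega
      obtain ⟨l', hs', hc', hm'⟩ := ih (p - 2 ^ a) hplt
      refine ⟨a ::ₘ l', by simp [hs']; omega, ?_, ?_⟩
      · simp only [Multiset.card_cons, pow_succ]
        have : (2:ℕ) ^ (a+1) = 2 ^ a * 2 := by ring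
        omega
      · intro b hb
        rcases Multiset.mem_cons.mp hb with rfl | hb
        · exact h1
        · exact le_trans (hm' b hb) (by omega)

/-- A representation with bounded exponents and a controlled number of terms. -/
lemma min_rep (k p : ℕ) (hk : 0 < k) : ∃ l : Multiset ℕ,
    (l.map (2 ^ ·)).sum = p ∧ (∀ a ∈ l, a ≤ k) ∧
    ((Multiset.card l : ℤ) + 1 - k) * 2 ^ k ≤ (p : ℤ) + 1 := by
  obtain ⟨lr, hs, hc, hm⟩ := two_pow_sum_rep (p % 2 ^ k)
  have hr : p % 2 ^ k < 2 ^ k := Nat.mod_lt _ (by positivity)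
  refine ⟨Multiset.replicate (p / 2 ^ k) k + lr, ?_, ?_, ?_⟩
  · rw [Multiset.map_add, Multiset.sum_add, Multiset.map_replicate, Multiset.sum_replicate,
      hs, smul_eq_mul, Nat.mul_comm]
    exact Nat.div_add_mod p (2 ^ k)
  · intro a haa
    rcases Multiset.mem_add.mp haa with h | h
    · exact le_of_eq (Multiset.eq_of_mem_replicate h)
    · have := hm a h
      have : 2 ^ a < 2 ^ k := lt_of_le_of_lt this hr
      exact le_of_lt ((pow_lt_pow_iff_right₀ (by norm_num)).mp this)
  · have hck : Multiset.card lr ≤ k := by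
      by_contra hcc
      push_neg at hcc
      have : 2 ^ k < 2 ^ Multiset.card lr := Nat.pow_lt_pow_right (by norm_num) hcc
      omega
    rw [Multiset.card_add, Multiset.card_replicate]
    set q := p / 2 ^ k
    set c := Multiset.card lr
    have hq : (2:ℤ) ^ k * q + (p % 2 ^ k : ℕ) = p := by
      exact_mod_cast Nat.div_add_mod p (2 ^ k)
    have key : ((c : ℤ) + 1 - k) * 2 ^ k ≤ (p % 2 ^ k : ℕ) + 1 := by
      rcases eq_or_lt_of_le hck with h | h
      · have h2 : (2:ℕ) ^ k ≤ p % 2 ^ k + 1 := h ▸ hc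
        rw [h]
        have : ((2:ℤ) ^ k) ≤ (p % 2 ^ k : ℕ) + 1 := by exact_mod_cast h2
        linarith
      · have h1 : ((c : ℤ) + 1 - k) ≤ 0 := by
          have : (c : ℤ) < k := by exact_mod_cast h
          linarith
        have h2 : (0:ℤ) < 2 ^ k := by positivity
        nlinarith
    push_cast
    nlinarith [key, hq]

/-- Splitting parts: the number of terms can be increased up to `p`. -/
lemma split_rep (k p : ℕ) : ∀ (d : ℕ) (l : Multiset ℕ),
    (l.map (2 ^ ·)).sum = p → (∀ a ∈ l, a ≤ k) → Multiset.card l + d ≤ p →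
    ∃ l' : Multiset ℕ, (l'.map (2 ^ ·)).sum = p ∧ (∀ a ∈ l', a ≤ k) ∧
      Multiset.card l' = Multiset.card l + d := by
  intro d
  induction d with
  | zero => exact fun l h1 h2 _ => ⟨l, h1, h2, rfl⟩
  | succ d ih =>
    intro l h1 h2 h3
    have hex : ∃ a ∈ l, 0 < a := by
      by_contra h
      push_neg at h
      have hle : (l.map (2 ^ ·)).sum ≤ Multiset.card (l.map (2 ^ ·)) • 1 := by
        apply Multiset.sum_le_card_nsmul
        intro x hx
        obtain ⟨a, ha, rfl⟩ := Multiset.mem_map.mp hx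
        have : a = 0 := Nat.le_zero.mp (h a ha)
        simp [this]
      simp only [Multiset.card_map, smul_eq_mul, mul_one] at hle
      omega
    obtain ⟨a, ha, hapos⟩ := hex
    have hconsl : a ::ₘ l.erase a = l := Multiset.cons_erase ha
    set l2 : Multiset ℕ := (a - 1) ::ₘ (a - 1) ::ₘ l.erase a with hl2
    have hsum2 : (l2.map (2 ^ ·)).sum = p := by
      rw [← h1, ← hconsl]
      simp only [hl2, Multiset.map_cons, Multiset.sum_cons]
      have h2a : 2 ^ (a - 1) + 2 ^ (a - 1) = 2 ^ a := by
        have hps := pow_succ 2 (a - 1)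
        have ha' : a - 1 + 1 = a := by omega
        rw [ha'] at hps
        omega
      omega
    have hmem2 : ∀ b ∈ l2, b ≤ k := by
      intro b hb
      simp only [hl2, Multiset.mem_cons] at hb
      rcases hb with rfl | rfl | hb
      · exact le_trans (by omega) (h2 a ha)
      · exact le_trans (by omega) (h2 a ha)
      · exact h2 b (Multiset.mem_of_mem_erase hb)
    have hcard2 : Multiset.card l2 = Multiset.card l + 1 := by
      have := congrArg Multiset.card hconsl
      simp only [Multiset.card_cons] at this ⊢
      simp only [hl2, Multiset.card_cons]
      omega
    obtain ⟨l', hA, hB, hC⟩ := ih l2 hsum2 hmem2 (by omega)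
    exact ⟨l', hA, hB, by omega⟩

/-- An arithmetical structure on `K n`. -/
def IsArithStruct (n : ℕ) (r : Fin n → ℕ) : Prop :=
  (∀ i, 0 < r i) ∧ Finset.univ.gcd r = 1 ∧ ∀ j, r j ∣ ∑ i, r i

theorem stmt_7 (n k p : ℕ) (hn : 2 ≤ n) (hk : 0 < k)
    (hkn : k + 2 ^ k - 1 ≤ n) (hp : Nat.Prime p)
    (hp1 : (n : ℤ) - 2 ^ k + 1 ≤ p)
    (hp2 : (p : ℤ) ≤ ((n : ℤ) - k - 2 ^ k + 3) * 2 ^ k - 3) :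
    ∃ r : Fin n → ℕ, IsArithStruct n r ∧ (∀ i, r i ≤ p) ∧ (∃ i, r i = p) := by
  have hkk : k < 2 ^ k := Nat.lt_two_pow_self
  have h2k1 : 1 ≤ 2 ^ k := Nat.one_le_two_pow
  have hcast : ((2 ^ k : ℕ) : ℤ) = (2 : ℤ) ^ k := by push_cast; ring
  rw [← hcast] at hp1 hp2
  obtain ⟨m, hmdef⟩ : ∃ m, n - (2 ^ k - 1) = m := ⟨_, rfl⟩
  have hnm : n = (2 ^ k - 1) + m := by omega
  have hmk : k ≤ m := by omega
  have hmp : m ≤ p := by omega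
  have hp2' : (p : ℤ) + 3 ≤ ((m : ℤ) - k + 2) * ((2 ^ k : ℕ) : ℤ) := by
    have hlin : ((n : ℤ) - k - ((2 ^ k : ℕ) : ℤ) + 3) = (m : ℤ) - k + 2 := by omega
    rw [hlin] at hp2
    omega
  -- get a representation with exactly m parts
  obtain ⟨l0, hs0, hm0, hc0⟩ := min_rep k p hk
  rw [← hcast] at hc0
  have hKpos : (0 : ℤ) < ((2 ^ k : ℕ) : ℤ) := by positivity
  have hC : Multiset.card l0 ≤ m := by
    have h1 : ((Multiset.card l0 : ℤ) + 1 - k) * ((2 ^ k : ℕ) : ℤ) <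
        ((m : ℤ) - k + 2) * ((2 ^ k : ℕ) : ℤ) := by omega
    have h2 := lt_of_mul_lt_mul_right h1 (le_of_lt hKpos)
    omega
  obtain ⟨l', hs', hm', hc'⟩ := split_rep k p (m - Multiset.card l0) l0 hs0 hm0 (by omega)
  have hcard : Multiset.card l' = m := by omega
  -- the list of exponents
  set L := l'.toList with hLdef
  have hL : L.length = m := by rw [hLdef, Multiset.length_toList, hcard]
  have hLsum : (L.map (2 ^ ·)).sum = p := by
    rw [hLdef, ← Multiset.sum_coe, ← Multiset.map_coe, Multiset.coe_toList]
    exact hs'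
  -- building blocks
  set f : Fin (2 ^ k - 1) → ℕ := fun _ => p with hf
  set g : Fin m → ℕ := fun j => 2 ^ L.get (Fin.cast hL.symm j) with hg
  set r : Fin n → ℕ := fun i => Fin.append f g (Fin.cast hnm i) with hrdef
  have hpow : ∀ a ∈ l', 2 ^ a ≤ p := by
    intro a ha
    have := Multiset.single_le_sum (s := l'.map (2 ^ ·)) (by intro x _; positivity)
      (2 ^ a) (Multiset.mem_map_of_mem _ ha)
    omega
  have happ : ∀ j : Fin ((2 ^ k - 1) + m),
      Fin.append f g j = p ∨ ∃ a ∈ l', Fin.append f g j = 2 ^ a := by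
    intro j
    refine Fin.addCases ?_ ?_ j
    · intro i; rw [Fin.append_left]; left; rfl
    · intro i; rw [Fin.append_right]; right
      refine ⟨L.get (Fin.cast hL.symm i), ?_, rfl⟩
      rw [← Multiset.mem_toList]
      exact List.mem_iff_get.mpr ⟨_, rfl⟩
  have hcases : ∀ i : Fin n, r i = p ∨ ∃ a ∈ l', r i = 2 ^ a := fun i => happ _
  -- the total sum
  have hsumr : ∑ i, r i = 2 ^ k * p := by
    have e1 : ∑ i : Fin n, r i = ∑ j : Fin ((2 ^ k - 1) + m), Fin.append f g j :=
      Fintype.sum_equiv (finCongr hnm) _ _ (fun i => rfl)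
    rw [e1, Fin.sum_univ_add]
    simp only [Fin.append_left, Fin.append_right, hf]
    rw [Finset.sum_const, Finset.card_univ, Fintype.card_fin, smul_eq_mul]
    have e2 : ∑ j : Fin m, g j = p := by
      have e3 : ∑ j : Fin m, g j = ∑ j : Fin L.length, 2 ^ L.get j := by
        refine Fintype.sum_equiv (finCongr hL.symm) _ _ (fun j => ?_)
        simp [hg]
      rw [e3, ← hLsum]
      simpa using Fin.sum_univ_get' L (2 ^ ·)
    rw [e2, Nat.sub_mul, one_mul]
    have h1 : 1 ≤ p := hp.pos
    have h2 : p ≤ 2 ^ k * p := Nat.le_mul_of_pos_left p (by positivity)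
    omega
  -- there is a part equal to 1 (exponent 0)
  have h0mem : (0 : ℕ) ∈ l' := by
    by_contra h0
    have hdvd2 : 2 ∣ p := by
      rw [← hs']
      apply Multiset.dvd_sum
      intro x hx
      obtain ⟨a, ha, rfl⟩ := Multiset.mem_map.mp hx
      have hane : a ≠ 0 := fun h => h0 (h ▸ ha)
      exact dvd_pow_self 2 hane
    have hpe : 2 = p := (Nat.prime_dvd_prime_iff_eq Nat.prime_two hp).mp hdvd2
    have hm2 : Multiset.card (l'.map (2 ^ ·)) • 2 ≤ (l'.map (2 ^ ·)).sum := by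
      apply Multiset.card_nsmul_le_sum
      intro x hx
      obtain ⟨a, ha, rfl⟩ := Multiset.mem_map.mp hx
      have hane : a ≠ 0 := fun h => h0 (h ▸ ha)
      calc 2 = 2 ^ 1 := by norm_num
        _ ≤ 2 ^ a := Nat.pow_le_pow_right (by norm_num) (by omega)
    simp only [Multiset.card_map, smul_eq_mul, hs', hcard] at hm2
    have hm1 : m = 1 := by omega
    rw [hm1, ← hpe] at hp2'
    push_cast at hp2'
    rw [← hcast] at hp2'
    -- 2 + 3 ≤ (1 - k + 2) * 2^k, contradiction
    rcases le_or_gt k 2 with hk2 | hk2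
    · have hk12 : k = 1 ∨ k = 2 := by omega
      have hK2k : ((2 ^ k : ℕ) : ℤ) ≤ 2 * k := by
        rcases hk12 with h | h <;> rw [h] <;> norm_num
      have hq : ((k : ℤ) - 1) * ((k : ℤ) - 2) = 0 := by
        rcases hk12 with h | h <;> rw [h] <;> norm_num
      have h3k : (0 : ℤ) ≤ 3 - k := by
        have : (k : ℤ) ≤ 2 := by exact_mod_cast hk2
        linarith
      have key : (3 - (k : ℤ)) * ((2 ^ k : ℕ) : ℤ) ≤ (3 - (k : ℤ)) * (2 * k) :=
        mul_le_mul_of_nonneg_left hK2k h3k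
      have h4 : (3 - (k : ℤ)) * (2 * k) = 4 := by linear_combination (-2 : ℤ) * hq
      linarith [hp2', key, h4]
    · have h3k : ((1 : ℤ) - k + 2) ≤ 0 := by
        have : (3 : ℤ) ≤ k := by exact_mod_cast hk2
        linarith
      have key : ((1 : ℤ) - k + 2) * ((2 ^ k : ℕ) : ℤ) ≤ 0 :=
        mul_nonpos_of_nonpos_of_nonneg h3k (le_of_lt hKpos)
      linarith [hp2', key]
  refine ⟨r, ⟨?_, ?_, ?_⟩, ?_, ?_⟩
  · -- positivity
    intro i
    rcases hcases i with h | ⟨a, _, h⟩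
    · rw [h]; exact hp.pos
    · rw [h]; positivity
  · -- gcd = 1
    have h0L : (0 : ℕ) ∈ L := Multiset.mem_toList.mpr h0mem
    obtain ⟨j, hj⟩ := List.mem_iff_get.mp h0L
    have hri1 : r (Fin.cast hnm.symm (Fin.natAdd (2 ^ k - 1) (Fin.cast hL j))) = 1 := by
      show Fin.append f g (Fin.cast hnm (Fin.cast hnm.symm _)) = 1
      rw [Fin.cast_cast, Fin.cast_eq_self, Fin.append_right]
      have hj' : L[(j : ℕ)] = 0 := by simpa [List.get_eq_getElem] using hj
      simp [hg, hj']
    have hdvd : Finset.univ.gcd r ∣ r (Fin.cast hnm.symm (Fin.natAdd (2 ^ k - 1) (Fin.cast hL j))) :=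
      Finset.gcd_dvd (Finset.mem_univ _)
    rw [hri1] at hdvd
    exact Nat.dvd_one.mp hdvd
  · -- divisibility
    intro j
    rw [hsumr]
    rcases hcases j with h | ⟨a, ha, h⟩
    · rw [h]; exact dvd_mul_left p (2 ^ k)
    · rw [h]
      exact dvd_mul_of_dvd_left (pow_dvd_pow 2 (hm' a ha)) p
  · -- max bound
    intro i
    rcases hcases i with h | ⟨a, ha, h⟩
    · rw [h]
    · rw [h]; exact hpow a ha
  · -- existence of p
    refine ⟨Fin.cast hnm.symm (Fin.castAdd m ⟨0, by omega⟩), ?_⟩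
    show Fin.append f g (Fin.cast hnm (Fin.cast hnm.symm _)) = p
    rw [Fin.cast_cast, Fin.cast_eq_self, Fin.append_left]
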